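/- Let M be an N×N unitary matrix and let I ⊆ J be intervals of indices such that J contains the b-neighborhood of I, where M is cyclically b-band-diagonal. Then the rows of M with indices in the complement of I, together with the standard basis vectors with indices in J, span all of C^N. -/

import Mathlib

/-- Cyclic distance on indices `0, ..., N-1`. -/
def cycDist (N i j : ℕ) : ℕ := min ((i : ℤ) - j).natAbs (N - ((i : ℤ) - j).natAbs)

open Fin.NatCast in
/-- A cyclic interval in `Fin N`: a set of consecutive residues. -/
def IsCycInterval {N : ℕ} [NeZero N] (S : Set (Fin N)) : Prop :=
  ∃ (a : Fin N) (len : ℕ), S = {i | ∃ t : ℕ, t < len ∧ i = a + (t : Fin N)}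

theorem rows_and_basis_span (N b : ℕ) [NeZero N]
    (M : Matrix (Fin N) (Fin N) ℂ) (hM : M ∈ Matrix.unitaryGroup (Fin N) ℂ)
    (hband : ∀ i j : Fin N, ¬ cycDist N i.val j.val < b → M i j = 0)
    (I J : Set (Fin N)) (hIJ : I ⊆ J) (hI : IsCycInterval I) (hJ : IsCycInterval J)
    (hnbhd : ∀ j : Fin N, (∃ i ∈ I, cycDist N i.val j.val < b) → j ∈ J) :
    Submodule.span ℂ
        (((fun i : Fin N => M i) '' Iᶜ) ∪ ((fun j : Fin N => Pi.single j (1 : ℂ)) '' J))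
      = ⊤ := by
  set S := ((fun i : Fin N => M i) '' Iᶜ) ∪ ((fun j : Fin N => Pi.single j (1 : ℂ)) '' J)
  have hrow : ∀ i : Fin N, M i ∈ Submodule.span ℂ S := by
    intro i
    by_cases hi : i ∈ I
    · have hexp : M i = ∑ j : Fin N, M i j • (Pi.single j (1 : ℂ) : Fin N → ℂ) := by
        classical
        ext k
        simp [Pi.single_apply]
      rw [hexp]
      apply Submodule.sum_mem
      intro j _
      by_cases h0 : M i j = 0
      · simp [h0]
      · refine Submodule.smul_mem _ _ (Submodule.subset_span (Or.inr ⟨j, ?_, rfl⟩))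
        exact hnbhd j ⟨i, hi, by by_contra hc; exact h0 (hband i j hc)⟩
    · exact Submodule.subset_span (Or.inl ⟨i, hi, rfl⟩)
  rw [eq_top_iff]
  intro v _
  have hv : v = Matrix.vecMul (Matrix.vecMul v (star M)) M := by
    rw [Matrix.vecMul_vecMul, hM.1, Matrix.vecMul_one]
  have hsum : ∀ w : Fin N → ℂ, Matrix.vecMul w M = ∑ i, w i • M i := by
    intro w
    ext j
    simp [Matrix.vecMul, dotProduct, Finset.sum_apply]
  rw [hv, hsum]
  exact Submodule.sum_mem _ fun i _ => Submodule.smul_mem _ _ (hrow i)
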